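/- Conditional decomposition of the tilted path measure: if R decomposes as R = R_{<t} + R_{≥t} where R_{<t} depends only on the history up to time t and R_{≥t} on the history from time t on, and P_F is a Markov path measure, then the tilted measure P_B ∝ e^{βR} P_F satisfies P_B[future | past up to x_t] = e^{β R_{≥t}} P_F[future | x_t] / Z_t(x_t), depending on the past only through x_t. -/

import Mathlib

open Real Finset

/-- The state trajectory generated from initial state `x0` by deterministic
transition `f` and action sequence `u`. -/
def trajState11 {X A : Type*} (f : X → A → X) (x0 : X) (u : ℕ → A) : ℕ → X
  | 0 => x0
  | t + 1 => f (trajState11 f x0 u t) (u t)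

/-- Extend a finite action history to an infinite one. -/
def padActions11 {A : Type*} [Inhabited A] (T : ℕ) (ω : Fin T → A) : ℕ → A :=
  fun t => if h : t < T then ω ⟨t, h⟩ else default

lemma traj_agree_lt {X A : Type*} (f : X → A → X) (x0 : X) (u v : ℕ → A)
    (n : ℕ) (h : ∀ s, s < n → u s = v s) :
    trajState11 f x0 u n = trajState11 f x0 v n := by
  induction n with
  | zero => rfl
  | succ n ih =>
    simp only [trajState11]
    rw [ih (fun s hs => h s (hs.trans (Nat.lt_succ_self n))), h n (Nat.lt_succ_self n)]

lemma traj_agree_ge {X A : Type*} (f : X → A → X) (x0 : X) (u v : ℕ → A)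
    (t n : ℕ) (htn : t ≤ n) (hstate : trajState11 f x0 u t = trajState11 f x0 v t)
    (h : ∀ s, t ≤ s → u s = v s) :
    trajState11 f x0 u n = trajState11 f x0 v n := by
  induction n with
  | zero =>
    have ht0 : t = 0 := Nat.le_zero.mp htn
    subst ht0; exact hstate
  | succ n ih =>
    rcases Nat.lt_or_ge t (n + 1) with h1 | h2
    · have h1' : t ≤ n := Nat.lt_succ_iff.mp h1
      simp only [trajState11]
      rw [ih h1', h n h1']
    · have : t = n + 1 := le_antisymm htn h2
      subst this; exact hstate
/-- Conditional decomposition of the tilted path measure: conditioned on the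
history up to time t, P_B ∝ e^{βR} P_F gives the future probability
e^{βR_{≥t}} P_F[future|x_t]/Z_t(x_t), which depends on the past only through
the state x_t. -/
theorem tilted_path_measure_conditional_decomposition
    {X A : Type*} [Fintype X] [Fintype A] [DecidableEq A] [Inhabited A]
    (T : ℕ) (f : X → A → X) (x0 : X) (pol : X → A → ℝ)
    (hpos : ∀ x a, 0 < pol x a) (hsum : ∀ x, ∑ a : A, pol x a = 1)
    (r : X → A → ℝ) (γ β : ℝ) (hγ : 0 < γ) (hγ1 : γ < 1) (hβ : 0 < β)
    (t : ℕ) (ht : t ≤ T)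
    (xs : (Fin T → A) → ℕ → X)
    (hxs : ∀ ω, xs ω = trajState11 f x0 (padActions11 T ω))
    (PF : (Fin T → A) → ℝ)
    (hPF : ∀ ω, PF ω = ∏ s : Fin T, pol (xs ω s) (ω s))
    (R : (Fin T → A) → ℝ)
    (hR : ∀ ω, R ω = ∑ s : Fin T, γ ^ (s : ℕ) * r (xs ω s) (ω s))
    (Rge : (Fin T → A) → ℝ)
    (hRge : ∀ ω, Rge ω =
      ∑ s : Fin T, if t ≤ (s : ℕ) then γ ^ (s : ℕ) * r (xs ω s) (ω s) else 0)
    (PB : (Fin T → A) → ℝ)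
    (hPB : ∀ ω, PB ω = Real.exp (β * R ω) * PF ω /
      ∑ ω' : Fin T → A, Real.exp (β * R ω') * PF ω')
    (PFfut : (Fin T → A) → ℝ)
    (hPFfut : ∀ ω, PFfut ω =
      ∏ s : Fin T, if t ≤ (s : ℕ) then pol (xs ω s) (ω s) else 1)
    (Z : (Fin T → A) → ℝ)
    (hZ : ∀ ω, Z ω =
      ∑ ω' ∈ Finset.univ.filter
        (fun ω' : Fin T → A => ∀ s : Fin T, (s : ℕ) < t → ω' s = ω s),
        Real.exp (β * Rge ω') * PFfut ω') :
    (∀ ω : Fin T → A,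
      PB ω /
          ∑ ω' ∈ Finset.univ.filter
            (fun ω' : Fin T → A => ∀ s : Fin T, (s : ℕ) < t → ω' s = ω s),
            PB ω' =
        Real.exp (β * Rge ω) * PFfut ω / Z ω) ∧
    (∀ ω₁ ω₂ : Fin T → A,
      xs ω₁ t = xs ω₂ t → (∀ s : Fin T, t ≤ (s : ℕ) → ω₁ s = ω₂ s) →
      PB ω₁ /
          ∑ ω' ∈ Finset.univ.filter
            (fun ω' : Fin T → A => ∀ s : Fin T, (s : ℕ) < t → ω' s = ω₁ s),
            PB ω' =
        PB ω₂ /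
          ∑ ω' ∈ Finset.univ.filter
            (fun ω' : Fin T → A => ∀ s : Fin T, (s : ℕ) < t → ω' s = ω₂ s),
            PB ω') := by
  -- agreement of states
  have hxs_lt : ∀ ω₁ ω₂ : Fin T → A, (∀ s : Fin T, (s : ℕ) < t → ω₁ s = ω₂ s) →
      ∀ n, n ≤ t → xs ω₁ n = xs ω₂ n := by
    intro ω₁ ω₂ hag n hn
    rw [hxs, hxs]
    apply traj_agree_lt
    intro s hs
    unfold padActions11
    split
    · exact hag ⟨s, ‹_›⟩ (lt_of_lt_of_le hs hn)
    · rfl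
  have hxs_ge : ∀ ω₁ ω₂ : Fin T → A, xs ω₁ t = xs ω₂ t →
      (∀ s : Fin T, t ≤ (s : ℕ) → ω₁ s = ω₂ s) →
      ∀ n, t ≤ n → xs ω₁ n = xs ω₂ n := by
    intro ω₁ ω₂ hst hag n hn
    rw [hxs, hxs]
    apply traj_agree_ge f x0 _ _ t n hn
    · rw [← hxs, ← hxs]; exact hst
    · intro s hs
      unfold padActions11
      split
      · exact hag ⟨s, ‹_›⟩ hs
      · rfl
  -- positivity facts
  have hPFpos : ∀ ω, 0 < PF ω := by
    intro ω; rw [hPF]; exact Finset.prod_pos fun s _ => hpos _ _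
  have hPFfutpos : ∀ ω, 0 < PFfut ω := by
    intro ω; rw [hPFfut]
    refine Finset.prod_pos fun s _ => ?_
    split
    · exact hpos _ _
    · exact one_pos
  have hSpos : 0 < ∑ ω' : Fin T → A, Real.exp (β * R ω') * PF ω' :=
    Finset.sum_pos (fun ω' _ => mul_pos (Real.exp_pos _) (hPFpos ω')) univ_nonempty
  -- past quantities
  set Rlt : (Fin T → A) → ℝ :=
    fun ω => ∑ s : Fin T, if (s : ℕ) < t then γ ^ (s : ℕ) * r (xs ω s) (ω s) else 0
    with hRlt_def
  set PFpast : (Fin T → A) → ℝ :=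
    fun ω => ∏ s : Fin T, if (s : ℕ) < t then pol (xs ω s) (ω s) else 1
    with hPFpast_def
  have hPFpastpos : ∀ ω, 0 < PFpast ω := by
    intro ω; rw [hPFpast_def]
    refine Finset.prod_pos fun s _ => ?_
    split
    · exact hpos _ _
    · exact one_pos
  have hRsplit : ∀ ω, Real.exp (β * R ω)
      = Real.exp (β * Rlt ω) * Real.exp (β * Rge ω) := by
    intro ω
    rw [← Real.exp_add, ← mul_add]
    have : R ω = Rlt ω + Rge ω := by
      rw [hR, hRge, hRlt_def, ← Finset.sum_add_distrib]
      refine Finset.sum_congr rfl fun s _ => ?_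
      rcases lt_or_ge (s : ℕ) t with h | h
      · rw [if_pos h, if_neg (not_le.mpr h), add_zero]
      · rw [if_neg (not_lt.mpr h), if_pos h, zero_add]
    rw [this]
  have hPFsplit : ∀ ω, PF ω = PFpast ω * PFfut ω := by
    intro ω
    rw [hPF, hPFfut, hPFpast_def, ← Finset.prod_mul_distrib]
    refine Finset.prod_congr rfl fun s _ => ?_
    rcases lt_or_ge (s : ℕ) t with h | h
    · rw [if_pos h, if_neg (not_le.mpr h), mul_one]
    · rw [if_neg (not_lt.mpr h), if_pos h, one_mul]
  -- past parts depend only on the past actions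
  have hRlt_eq : ∀ ω₁ ω₂ : Fin T → A,
      (∀ s : Fin T, (s : ℕ) < t → ω₁ s = ω₂ s) → Rlt ω₁ = Rlt ω₂ := by
    intro ω₁ ω₂ hag
    rw [hRlt_def]
    refine Finset.sum_congr rfl fun s _ => ?_
    rcases lt_or_ge (s : ℕ) t with h | h
    · rw [if_pos h, if_pos h, hxs_lt ω₁ ω₂ hag s (le_of_lt h), hag s h]
    · rw [if_neg (not_lt.mpr h), if_neg (not_lt.mpr h)]
  have hPFpast_eq : ∀ ω₁ ω₂ : Fin T → A,
      (∀ s : Fin T, (s : ℕ) < t → ω₁ s = ω₂ s) → PFpast ω₁ = PFpast ω₂ := by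
    intro ω₁ ω₂ hag
    rw [hPFpast_def]
    refine Finset.prod_congr rfl fun s _ => ?_
    rcases lt_or_ge (s : ℕ) t with h | h
    · rw [if_pos h, if_pos h, hxs_lt ω₁ ω₂ hag s (le_of_lt h), hag s h]
    · rw [if_neg (not_lt.mpr h), if_neg (not_lt.mpr h)]
  -- future parts depend only on state at t and future actions
  have hRge_eq : ∀ ω₁ ω₂ : Fin T → A, xs ω₁ t = xs ω₂ t →
      (∀ s : Fin T, t ≤ (s : ℕ) → ω₁ s = ω₂ s) → Rge ω₁ = Rge ω₂ := by
    intro ω₁ ω₂ hst hag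
    rw [hRge, hRge]
    refine Finset.sum_congr rfl fun s _ => ?_
    rcases le_or_gt t (s : ℕ) with h | h
    · rw [if_pos h, if_pos h, hxs_ge ω₁ ω₂ hst hag s h, hag s h]
    · rw [if_neg (not_le.mpr h), if_neg (not_le.mpr h)]
  have hPFfut_eq : ∀ ω₁ ω₂ : Fin T → A, xs ω₁ t = xs ω₂ t →
      (∀ s : Fin T, t ≤ (s : ℕ) → ω₁ s = ω₂ s) → PFfut ω₁ = PFfut ω₂ := by
    intro ω₁ ω₂ hst hag
    rw [hPFfut, hPFfut]
    refine Finset.prod_congr rfl fun s _ => ?_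
    rcases le_or_gt t (s : ℕ) with h | h
    · rw [if_pos h, if_pos h, hxs_ge ω₁ ω₂ hst hag s h, hag s h]
    · rw [if_neg (not_le.mpr h), if_neg (not_le.mpr h)]
  have hZpos : ∀ ω, 0 < Z ω := by
    intro ω
    rw [hZ]
    refine Finset.sum_pos (fun ω' _ => mul_pos (Real.exp_pos _) (hPFfutpos ω')) ?_
    exact ⟨ω, Finset.mem_filter.mpr ⟨Finset.mem_univ _, fun s _ => rfl⟩⟩
  -- Part 1
  have key : ∀ ω : Fin T → A,
      PB ω /
          ∑ ω' ∈ Finset.univ.filter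
            (fun ω' : Fin T → A => ∀ s : Fin T, (s : ℕ) < t → ω' s = ω s),
            PB ω' =
        Real.exp (β * Rge ω) * PFfut ω / Z ω := by
    intro ω
    set S := ∑ ω' : Fin T → A, Real.exp (β * R ω') * PF ω' with hSdef
    set C := Real.exp (β * Rlt ω) * PFpast ω with hCdef
    have hCpos : 0 < C := mul_pos (Real.exp_pos _) (hPFpastpos ω)
    have hnum : PB ω = C * (Real.exp (β * Rge ω) * PFfut ω) / S := by
      rw [hPB, hRsplit, hPFsplit, hCdef]; ring_nf
    have hden : (∑ ω' ∈ Finset.univ.filter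
        (fun ω' : Fin T → A => ∀ s : Fin T, (s : ℕ) < t → ω' s = ω s),
        PB ω') = C * Z ω / S := by
      rw [hZ, Finset.mul_sum, Finset.sum_div]
      refine Finset.sum_congr rfl fun ω' hω' => ?_
      have hag : ∀ s : Fin T, (s : ℕ) < t → ω' s = ω s :=
        (Finset.mem_filter.mp hω').2
      rw [hPB, hRsplit, hPFsplit, hCdef,
        hRlt_eq ω' ω hag, hPFpast_eq ω' ω hag]
      ring_nf
    rw [hnum, hden]
    have hZne := (hZpos ω).ne'
    have hSne := hSpos.ne'
    have hCne := hCpos.ne'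
    field_simp
  refine ⟨key, ?_⟩
  intro ω₁ ω₂ hst hag
  rw [key ω₁, key ω₂, hRge_eq ω₁ ω₂ hst hag, hPFfut_eq ω₁ ω₂ hst hag]
  -- remains: Z ω₁ = Z ω₂
  have hZeq : Z ω₁ = Z ω₂ := by
    rw [hZ, hZ]
    refine Finset.sum_nbij' (fun ω' => fun s => if (s : ℕ) < t then ω₂ s else ω' s)
      (fun ω' => fun s => if (s : ℕ) < t then ω₁ s else ω' s)
      ?_ ?_ ?_ ?_ ?_
    · intro ω' hω'
      refine Finset.mem_filter.mpr ⟨Finset.mem_univ _, fun s hs => ?_⟩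
      simp [hs]
    · intro ω' hω'
      refine Finset.mem_filter.mpr ⟨Finset.mem_univ _, fun s hs => ?_⟩
      simp [hs]
    · intro ω' hω'
      funext s
      rcases lt_or_ge (s : ℕ) t with h | h
      · simp [h, (Finset.mem_filter.mp hω').2 s h]
      · simp [not_lt.mpr h]
    · intro ω' hω'
      funext s
      rcases lt_or_ge (s : ℕ) t with h | h
      · simp [h, (Finset.mem_filter.mp hω').2 s h]
      · simp [not_lt.mpr h]
    · intro ω' hω'
      have hag' : ∀ s : Fin T, (s : ℕ) < t → ω' s = ω₁ s :=
        (Finset.mem_filter.mp hω').2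
      have hagge : ∀ s : Fin T, t ≤ (s : ℕ) →
          ω' s = (fun s : Fin T => if (s : ℕ) < t then ω₂ s else ω' s) s := by
        intro s hs; simp [not_lt.mpr hs]
      have hstate : xs ω' t = xs (fun s : Fin T => if (s : ℕ) < t then ω₂ s else ω' s) t := by
        have h1 : xs ω' t = xs ω₁ t := hxs_lt ω' ω₁ hag' t le_rfl
        have h2 : xs (fun s : Fin T => if (s : ℕ) < t then ω₂ s else ω' s) t = xs ω₂ t := by
          refine hxs_lt _ _ (fun s hs => ?_) t le_rfl
          simp [hs]
        rw [h1, h2, hst]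
      rw [hRge_eq _ _ hstate hagge, hPFfut_eq _ _ hstate hagge]
  rw [hZeq]
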